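/- There exists an absolute constant C > 0 such that for every odd prime power q, every r ∈ 𝔽_q \ {0}, and every function f : C_r → ℂ on the circle C_r ⊆ 𝔽_q², the L²→L⁴ extension estimate holds: ( Σ_{c ∈ 𝔽_q²} | |C_r|^{-1} Σ_{x ∈ C_r} χ(c·x) f(x) |⁴ )^{1/4} ≤ C ( |C_r|^{-1} Σ_{x ∈ C_r} |f(x)|² )^{1/2}. -/

import Mathlib

open Finset

/-- Dot product `x·y = x₁y₁ + ⋯ + xₙyₙ` on `𝔽_q^n`. -/
def dotP {F : Type*} [CommRing F] {n : ℕ} (x y : Fin n → F) : F := ∑ i, x i * y i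

/-- The "norm" `‖x‖ = x₁² + ⋯ + xₙ²` on `𝔽_q^n`. -/
def nrm {F : Type*} [CommRing F] {n : ℕ} (x : Fin n → F) : F := ∑ i, x i * x i

/-- The sphere `S_r = {x ∈ 𝔽_q^n : ‖x‖ = r}`. -/
def sph (F : Type*) [CommRing F] [Fintype F] [DecidableEq F] (n : ℕ) (r : F) :
    Finset (Fin n → F) := Finset.univ.filter fun x => nrm x = r

/-- The dot product set `∏(E) = {x·y : x, y ∈ E}`. -/
def prodSet {F : Type*} [CommRing F] [DecidableEq F] {n : ℕ} (E : Finset (Fin n → F)) :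
    Finset F := (E ×ˢ E).image fun p => dotP p.1 p.2

/-- Fourier transform of the indicator function of `X`:
`X̂(m) = q^{-n} ∑_{x ∈ X} χ(-x·m)`. -/
noncomputable def fourierCoef {F : Type*} [CommRing F] [Fintype F] {n : ℕ}
    (χ : AddChar F ℂ) (X : Finset (Fin n → F)) (m : Fin n → F) : ℂ :=
  ((Fintype.card F : ℂ) ^ n)⁻¹ * ∑ x ∈ X, χ (-(dotP x m))

set_option linter.unusedSectionVars false
set_option maxHeartbeats 1000000
section aux
section basic
variable {F : Type} [Field F] [Fintype F] [DecidableEq F]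

lemma dotP_two (x y : Fin 2 → F) : dotP x y = x 0 * y 0 + x 1 * y 1 := by
  simp [dotP, Fin.sum_univ_two]

lemma nrm_two (x : Fin 2 → F) : nrm x = x 0 * x 0 + x 1 * x 1 := by
  simp [nrm, Fin.sum_univ_two]

lemma dotP_comm (x y : Fin 2 → F) : dotP x y = dotP y x := by
  simp [dotP_two, mul_comm]

lemma dotP_sub_right (w s t : Fin 2 → F) : dotP w (s - t) = dotP w s - dotP w t := by
  simp [dotP_two]; ring

lemma vec_bij : Function.Bijective (fun p : F × F => ![p.1, p.2]) := by
  constructor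
  · intro p q h
    have h0 := congrFun h 0
    have h1 := congrFun h 1
    simp at h0 h1
    exact Prod.ext h0 h1
  · intro w
    exact ⟨(w 0, w 1), by funext i; fin_cases i <;> simp⟩

lemma sum_pi2 {M : Type*} [AddCommMonoid M] (h : (Fin 2 → F) → M) :
    ∑ w : Fin 2 → F, h w = ∑ p : F × F, h ![p.1, p.2] :=
  (Fintype.sum_bijective _ vec_bij _ _ (fun _ => rfl)).symm

lemma sum_char_dot {χ : AddChar F ℂ} (hχ : χ ≠ 1) (u : Fin 2 → F) :
    ∑ w : Fin 2 → F, χ (dotP w u)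
      = if u = 0 then ((Fintype.card F : ℂ))^2 else 0 := by
  have hprim : χ.IsPrimitive := AddChar.IsPrimitive.of_ne_one hχ
  rw [sum_pi2 (fun w => χ (dotP w u))]
  have : ∀ p : F × F, χ (dotP ![p.1, p.2] u) = χ (p.1 * u 0) * χ (p.2 * u 1) := by
    intro p
    rw [dotP_two, AddChar.map_add_eq_mul]
    simp only [Matrix.cons_val_zero, Matrix.cons_val_one, Matrix.head_cons]
  simp_rw [this]
  rw [Fintype.sum_prod_type]
  dsimp only
  rw [← Finset.sum_mul_sum]
  rw [AddChar.sum_mulShift _ hprim, AddChar.sum_mulShift _ hprim]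
  have hu : u = 0 ↔ u 0 = 0 ∧ u 1 = 0 := by
    constructor
    · intro h; simp [h]
    · intro ⟨h0, h1⟩; funext i; fin_cases i <;> simpa
  by_cases h0 : u 0 = 0 <;> by_cases h1 : u 1 = 0 <;>
    simp [h0, h1, hu, sq]

end basic

section planch
variable {F : Type} [Field F] [Fintype F] [DecidableEq F]
open Complex

lemma plancherelC {χ : AddChar F ℂ} (hχ : χ ≠ 1) (G : (Fin 2 → F) → ℂ) :
    ∑ w : Fin 2 → F, (∑ s : Fin 2 → F, χ (dotP w s) * G s) *
        (starRingEnd ℂ) (∑ t : Fin 2 → F, χ (dotP w t) * G t)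
      = (Fintype.card F : ℂ)^2 * ∑ s : Fin 2 → F, G s * (starRingEnd ℂ) (G s) := by
  have expand : ∀ w : Fin 2 → F,
      (∑ s : Fin 2 → F, χ (dotP w s) * G s) *
        (starRingEnd ℂ) (∑ t : Fin 2 → F, χ (dotP w t) * G t)
      = ∑ s : Fin 2 → F, ∑ t : Fin 2 → F,
          (G s * (starRingEnd ℂ) (G t)) * χ (dotP w (s - t)) := by
    intro w
    rw [map_sum, Finset.sum_mul_sum]
    refine Finset.sum_congr rfl fun s _ => Finset.sum_congr rfl fun t _ => ?_
    rw [map_mul, ← AddChar.map_neg_eq_conj, dotP_sub_right, sub_eq_add_neg,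
      AddChar.map_add_eq_mul]
    ring
  simp_rw [expand]
  rw [Finset.sum_comm]
  have swap2 : ∀ s : Fin 2 → F,
      ∑ w : Fin 2 → F, ∑ t : Fin 2 → F, (G s * (starRingEnd ℂ) (G t)) * χ (dotP w (s - t))
      = G s * (starRingEnd ℂ) (G s) * (Fintype.card F : ℂ)^2 := by
    intro s
    rw [Finset.sum_comm]
    have : ∀ t : Fin 2 → F,
        ∑ w : Fin 2 → F, (G s * (starRingEnd ℂ) (G t)) * χ (dotP w (s - t))
        = (G s * (starRingEnd ℂ) (G t)) * (if s = t then (Fintype.card F : ℂ)^2 else 0) := by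
      intro t
      rw [← Finset.mul_sum, sum_char_dot hχ]
      simp only [sub_eq_zero]
    simp_rw [this, mul_ite, mul_zero]
    rw [Finset.sum_ite_eq]
    simp
  simp_rw [swap2]
  rw [← Finset.sum_mul, mul_comm]

lemma plancherel {χ : AddChar F ℂ} (hχ : χ ≠ 1) (G : (Fin 2 → F) → ℂ) :
    ∑ w : Fin 2 → F, ‖∑ s : Fin 2 → F, χ (dotP w s) * G s‖^2
      = (Fintype.card F : ℝ)^2 * ∑ s : Fin 2 → F, ‖G s‖^2 := by
  have h := plancherelC hχ G
  simp_rw [Complex.mul_conj'] at h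
  exact_mod_cast h

end planch

section geom
variable {F : Type} [Field F] [Fintype F] [DecidableEq F]

lemma vec_ne_zero {x : Fin 2 → F} (h : x ≠ 0) : x 0 ≠ 0 ∨ x 1 ≠ 0 := by
  by_contra hc
  push_neg at hc
  exact h (funext fun i => by fin_cases i <;> simp [hc.1, hc.2])

lemma det_eq_zero {a b c : Fin 2 → F} (ha : a ≠ 0) (hb : dotP a b = 0) (hc : dotP a c = 0) :
    b 0 * c 1 = b 1 * c 0 := by
  rw [dotP_two] at hb hc
  rcases vec_ne_zero ha with h | h
  · have key : a 0 * (b 0 * c 1) = a 0 * (b 1 * c 0) := by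
      linear_combination c 1 * hb - b 1 * hc
    exact mul_left_cancel₀ h key
  · have key : a 1 * (b 0 * c 1) = a 1 * (b 1 * c 0) := by
      linear_combination b 0 * hc - c 0 * hb
    exact mul_left_cancel₀ h key

lemma eq_smul_of {a d e : Fin 2 → F} (ha : a ≠ 0) (hd : dotP a d = 0) (he : dotP a e = 0)
    (hd0 : d ≠ 0) : ∃ t : F, ∀ i, e i = t * d i := by
  have det := det_eq_zero ha hd he
  rcases vec_ne_zero hd0 with h | h
  · refine ⟨e 0 / d 0, ?_⟩
    rw [Fin.forall_fin_two]
    constructor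
    · exact (div_mul_cancel₀ _ h).symm
    · rw [div_mul_eq_mul_div, eq_div_iff h]
      linear_combination det
  · refine ⟨e 1 / d 1, ?_⟩
    rw [Fin.forall_fin_two]
    constructor
    · rw [div_mul_eq_mul_div, eq_div_iff h]
      linear_combination -det
    · exact (div_mul_cancel₀ _ h).symm

lemma three_points (h2 : (2:F) ≠ 0) {r : F} (hr : r ≠ 0) {s x y z : Fin 2 → F}
    (hs : s ≠ 0) (hxy : x ≠ y) (hxz : x ≠ z) (hyz : y ≠ z)
    (hx : nrm x = r) (hy : nrm y = r) (hz : nrm z = r)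
    (hsx : nrm (s - x) = r) (hsy : nrm (s - y) = r) (hsz : nrm (s - z) = r) : False := by
  rw [nrm_two] at hx hy hz hsx hsy hsz
  simp only [Pi.sub_apply] at hsx hsy hsz
  set d := x - y with hdd'
  set e := x - z with hee'
  have hd0 : d ≠ 0 := sub_ne_zero.mpr hxy
  have he0 : e ≠ 0 := sub_ne_zero.mpr hxz
  have hde : d ≠ e := fun h => hyz (sub_right_injective h)
  have hdi : ∀ i, d i = x i - y i := fun i => rfl
  have hei : ∀ i, e i = x i - z i := fun i => rfl
  have hsd : dotP s d = 0 := by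
    have h2sd : (2:F) * dotP s d = 0 := by
      rw [dotP_two, hdi 0, hdi 1]
      linear_combination hx - hsx - hy + hsy
    exact (mul_eq_zero.mp h2sd).resolve_left h2
  have hse : dotP s e = 0 := by
    have h2se : (2:F) * dotP s e = 0 := by
      rw [dotP_two, hei 0, hei 1]
      linear_combination hx - hsx - hz + hsz
    exact (mul_eq_zero.mp h2se).resolve_left h2
  obtain ⟨t, ht⟩ := eq_smul_of hs hsd hse hd0
  have ht0 : t ≠ 0 := by
    rintro rfl
    exact he0 (funext fun i => by rw [ht i, zero_mul]; rfl)
  have ht1 : t ≠ 1 := by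
    rintro rfl
    exact hde (funext fun i => by rw [ht i, one_mul]).symm
  have hxd : 2 * dotP x d = nrm d := by
    rw [dotP_two, nrm_two, hdi 0, hdi 1]
    linear_combination hx - hy
  have hxe : 2 * dotP x e = nrm e := by
    rw [dotP_two, nrm_two, hei 0, hei 1]
    linear_combination hx - hz
  have hne : nrm e = t * t * nrm d := by
    rw [nrm_two, nrm_two, ht 0, ht 1]; ring
  have hxe2 : dotP x e = t * dotP x d := by
    rw [dotP_two, dotP_two, ht 0, ht 1]; ring
  rw [hxe2, hne] at hxe
  have key : t * ((1 - t) * nrm d) = 0 := by linear_combination hxe - t * hxd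
  have hnd : nrm d = 0 := by
    rcases mul_eq_zero.mp key with h | h
    · exact absurd h ht0
    rcases mul_eq_zero.mp h with h' | h'
    · exact absurd (by linear_combination -h' : t = 1) ht1
    · exact h'
  have hdx : dotP d x = 0 := by
    rw [hnd] at hxd
    rw [dotP_comm]
    exact (mul_eq_zero.mp hxd).resolve_left h2
  have hddz : dotP d d = 0 := hnd
  obtain ⟨u, hu⟩ := eq_smul_of hd0 hddz hdx hd0
  apply hr
  have : r = u * u * nrm d := by
    rw [← (nrm_two x ▸ hx : nrm x = r), nrm_two, nrm_two, hu 0, hu 1]; ring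
  rw [hnd, mul_zero] at this
  exact this

lemma pairs_card_le (h2 : (2:F) ≠ 0) {r : F} (hr : r ≠ 0) {s : Fin 2 → F} (hs : s ≠ 0) :
    (((sph F 2 r) ×ˢ (sph F 2 r)).filter fun p => p.1 + p.2 = s).card ≤ 2 := by
  by_contra hc
  push_neg at hc
  rw [Finset.two_lt_card] at hc
  obtain ⟨p, hp, q, hq, p', hp', hpq, hpp', hqp'⟩ := hc
  simp only [Finset.mem_filter, Finset.mem_product, sph, Finset.mem_univ, true_and] at hp hq hp'
  have e1 : p.2 = s - p.1 := by rw [← hp.2]; abel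
  have e2 : q.2 = s - q.1 := by rw [← hq.2]; abel
  have e3 : p'.2 = s - p'.1 := by rw [← hp'.2]; abel
  have d1 : p.1 ≠ q.1 := fun h => hpq (Prod.ext h (by rw [e1, e2, h]))
  have d2 : p.1 ≠ p'.1 := fun h => hpp' (Prod.ext h (by rw [e1, e3, h]))
  have d3 : q.1 ≠ p'.1 := fun h => hqp' (Prod.ext h (by rw [e2, e3, h]))
  exact three_points h2 hr hs d1 d2 d3 hp.1.1 hq.1.1 hp'.1.1
    (e1 ▸ hp.1.2) (e2 ▸ hq.1.2) (e3 ▸ hp'.1.2)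

end geom

section conv
variable {F : Type} [Field F] [Fintype F] [DecidableEq F]

lemma dotP_add_right (w x y : Fin 2 → F) : dotP w (x + y) = dotP w x + dotP w y := by
  simp [dotP_two]; ring

noncomputable def convC (r : F) (f : (Fin 2 → F) → ℂ) (s : Fin 2 → F) : ℂ :=
  ∑ p ∈ ((sph F 2 r) ×ˢ (sph F 2 r)).filter (fun p => p.1 + p.2 = s), f p.1 * f p.2

lemma sq_eq (χ : AddChar F ℂ) (r : F) (f : (Fin 2 → F) → ℂ) (w : Fin 2 → F) :
    (∑ x ∈ sph F 2 r, χ (dotP w x) * f x)^2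
      = ∑ s : Fin 2 → F, χ (dotP w s) * convC r f s := by
  rw [sq, Finset.sum_mul_sum]
  have lhs : ∑ x ∈ sph F 2 r, ∑ y ∈ sph F 2 r,
      (χ (dotP w x) * f x) * (χ (dotP w y) * f y)
      = ∑ p ∈ (sph F 2 r) ×ˢ (sph F 2 r), χ (dotP w (p.1 + p.2)) * (f p.1 * f p.2) := by
    rw [Finset.sum_product]
    refine Finset.sum_congr rfl fun x _ => Finset.sum_congr rfl fun y _ => ?_
    rw [dotP_add_right, AddChar.map_add_eq_mul]
    ring
  rw [lhs]
  unfold convC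
  rw [← Finset.sum_fiberwise ((sph F 2 r) ×ˢ (sph F 2 r)) (fun p => p.1 + p.2)
    (fun p => χ (dotP w (p.1 + p.2)) * (f p.1 * f p.2))]
  refine Finset.sum_congr rfl fun s _ => ?_
  rw [Finset.mul_sum]
  refine Finset.sum_congr rfl fun p hp => ?_
  rw [(Finset.mem_filter.mp hp).2]

lemma neg_mem_sph {r : F} {x : Fin 2 → F} (hx : x ∈ sph F 2 r) : -x ∈ sph F 2 r := by
  simp only [sph, Finset.mem_filter, Finset.mem_univ, true_and, nrm_two] at hx ⊢
  simpa using hx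

lemma conv_zero_bound (r : F) (f : (Fin 2 → F) → ℂ) :
    ‖convC r f 0‖ ≤ ∑ x ∈ sph F 2 r, ‖f x‖^2 := by
  have h0 : convC r f 0 = ∑ x ∈ sph F 2 r, f x * f (-x) := by
    unfold convC
    refine Finset.sum_bij' (fun p _ => p.1) (fun x _ => (x, -x)) ?_ ?_ ?_ ?_ ?_
    · intro p hp
      simp only [Finset.mem_filter, Finset.mem_product] at hp
      exact hp.1.1
    · intro x hx
      simp only [Finset.mem_filter, Finset.mem_product]
      exact ⟨⟨hx, neg_mem_sph hx⟩, add_neg_cancel x⟩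
    · intro p hp
      simp only [Finset.mem_filter, Finset.mem_product] at hp
      have h2' : p.2 = -p.1 := eq_neg_of_add_eq_zero_right hp.2
      exact Prod.ext rfl h2'.symm
    · intro x hx; rfl
    · intro p hp
      simp only [Finset.mem_filter, Finset.mem_product] at hp
      have h2' : p.2 = -p.1 := eq_neg_of_add_eq_zero_right hp.2
      rw [h2']
  rw [h0]
  calc ‖∑ x ∈ sph F 2 r, f x * f (-x)‖ ≤ ∑ x ∈ sph F 2 r, ‖f x‖ * ‖f (-x)‖ := by
        refine (norm_sum_le _ _).trans ?_
        refine Finset.sum_le_sum fun x _ => ?_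
        rw [norm_mul]
    _ ≤ ∑ x ∈ sph F 2 r, (‖f x‖^2 + ‖f (-x)‖^2) / 2 := by
        refine Finset.sum_le_sum fun x _ => ?_
        nlinarith [sq_nonneg (‖f x‖ - ‖f (-x)‖)]
    _ = ((∑ x ∈ sph F 2 r, ‖f x‖^2) + ∑ x ∈ sph F 2 r, ‖f (-x)‖^2) / 2 := by
        rw [← Finset.sum_add_distrib, Finset.sum_div]
    _ = ∑ x ∈ sph F 2 r, ‖f x‖^2 := by
        have : ∑ x ∈ sph F 2 r, ‖f (-x)‖^2 = ∑ x ∈ sph F 2 r, ‖f x‖^2 :=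
          Finset.sum_nbij' (fun x => -x) (fun x => -x) (fun x hx => neg_mem_sph hx)
            (fun x hx => neg_mem_sph hx) (fun x _ => neg_neg x) (fun x _ => neg_neg x)
            (fun x _ => rfl)
        rw [this]; ring

lemma conv_ne_bound (h2 : (2:F) ≠ 0) {r : F} (hr : r ≠ 0) (f : (Fin 2 → F) → ℂ)
    {s : Fin 2 → F} (hs : s ≠ 0) :
    ‖convC r f s‖^2 ≤ 2 * ∑ p ∈ ((sph F 2 r) ×ˢ (sph F 2 r)).filter
        (fun p => p.1 + p.2 = s), ‖f p.1‖^2 * ‖f p.2‖^2 := by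
  have h1 : ‖convC r f s‖ ≤ ∑ p ∈ ((sph F 2 r) ×ˢ (sph F 2 r)).filter
      (fun p => p.1 + p.2 = s), ‖f p.1‖ * ‖f p.2‖ := by
    refine (norm_sum_le _ _).trans ?_
    refine Finset.sum_le_sum fun p _ => ?_
    rw [norm_mul]
  have h2' : (∑ p ∈ ((sph F 2 r) ×ˢ (sph F 2 r)).filter (fun p => p.1 + p.2 = s),
      ‖f p.1‖ * ‖f p.2‖)^2 ≤ 2 * ∑ p ∈ ((sph F 2 r) ×ˢ (sph F 2 r)).filter
        (fun p => p.1 + p.2 = s), ‖f p.1‖^2 * ‖f p.2‖^2 := by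
    calc _ ≤ (((sph F 2 r) ×ˢ (sph F 2 r)).filter (fun p => p.1 + p.2 = s)).card *
          ∑ p ∈ ((sph F 2 r) ×ˢ (sph F 2 r)).filter (fun p => p.1 + p.2 = s),
            (‖f p.1‖ * ‖f p.2‖)^2 := sq_sum_le_card_mul_sum_sq
      _ ≤ _ := by
          rw [show ∀ P : Finset ((Fin 2 → F) × (Fin 2 → F)), ∀ g : _ → ℝ,
            (P.card : ℝ) * ∑ p ∈ P, g p = P.card * ∑ p ∈ P, g p from fun _ _ => rfl]
          refine mul_le_mul ?_ ?_ ?_ (by norm_num)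
          · exact_mod_cast pairs_card_le h2 hr hs
          · refine Finset.sum_le_sum fun p _ => ?_
            rw [mul_pow]
          · positivity
  calc ‖convC r f s‖^2 ≤ (∑ p ∈ ((sph F 2 r) ×ˢ (sph F 2 r)).filter
        (fun p => p.1 + p.2 = s), ‖f p.1‖ * ‖f p.2‖)^2 := by
        refine pow_le_pow_left₀ (norm_nonneg _) h1 2
    _ ≤ _ := h2'

lemma conv_total (h2 : (2:F) ≠ 0) {r : F} (hr : r ≠ 0) (f : (Fin 2 → F) → ℂ) :
    ∑ s : Fin 2 → F, ‖convC r f s‖^2 ≤ 3 * (∑ x ∈ sph F 2 r, ‖f x‖^2)^2 := by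
  set T := ∑ x ∈ sph F 2 r, ‖f x‖^2 with hT
  have hT0 : 0 ≤ T := Finset.sum_nonneg fun x _ => sq_nonneg _
  rw [← Finset.add_sum_erase Finset.univ _ (Finset.mem_univ (0 : Fin 2 → F))]
  have b1 : ‖convC r f 0‖^2 ≤ T^2 :=
    pow_le_pow_left₀ (norm_nonneg _) (conv_zero_bound r f) 2
  have b2 : ∑ s ∈ Finset.univ.erase (0 : Fin 2 → F), ‖convC r f s‖^2 ≤ 2 * T^2 := by
    calc ∑ s ∈ Finset.univ.erase (0 : Fin 2 → F), ‖convC r f s‖^2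
        ≤ ∑ s ∈ Finset.univ.erase (0 : Fin 2 → F),
            2 * ∑ p ∈ ((sph F 2 r) ×ˢ (sph F 2 r)).filter
              (fun p => p.1 + p.2 = s), ‖f p.1‖^2 * ‖f p.2‖^2 := by
          refine Finset.sum_le_sum fun s hs => ?_
          exact conv_ne_bound h2 hr f (Finset.ne_of_mem_erase hs)
      _ = 2 * ∑ s ∈ Finset.univ.erase (0 : Fin 2 → F),
            ∑ p ∈ ((sph F 2 r) ×ˢ (sph F 2 r)).filter
              (fun p => p.1 + p.2 = s), ‖f p.1‖^2 * ‖f p.2‖^2 := by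
          rw [Finset.mul_sum]
      _ ≤ 2 * ∑ s : Fin 2 → F,
            ∑ p ∈ ((sph F 2 r) ×ˢ (sph F 2 r)).filter
              (fun p => p.1 + p.2 = s), ‖f p.1‖^2 * ‖f p.2‖^2 := by
          refine mul_le_mul_of_nonneg_left ?_ (by norm_num)
          refine Finset.sum_le_sum_of_subset_of_nonneg (Finset.subset_univ _) ?_
          intro s _ _
          exact Finset.sum_nonneg fun p _ => by positivity
      _ = 2 * T^2 := by
          rw [Finset.sum_fiberwise ((sph F 2 r) ×ˢ (sph F 2 r)) (fun p => p.1 + p.2)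
            (fun p => ‖f p.1‖^2 * ‖f p.2‖^2)]
          rw [hT, sq, Finset.sum_mul_sum, Finset.sum_product]
  linarith

end conv

section cardsec
variable {F : Type} [Field F] [Fintype F] [DecidableEq F]

lemma char_ne_two (hodd : Odd (Fintype.card F)) : ringChar F ≠ 2 := by
  intro h
  have h2 := FiniteField.even_card_iff_char_two.mp h
  rw [Nat.odd_iff] at hodd
  omega

lemma char_sum_eq (hchar : ringChar F ≠ 2) {r : F} (hr : r ≠ 0) :
    ∑ a : F, quadraticChar F (r - a^2) = - quadraticChar F (-1) := by
  classical
  -- regroup by t = a^2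
  have regroup : ∑ a : F, quadraticChar F (r - a^2)
      = ∑ t : F, ((Finset.univ.filter (fun a : F => a^2 = t)).card : ℤ)
          * quadraticChar F (r - t) := by
    rw [← Finset.sum_fiberwise Finset.univ (fun a : F => a^2)
      (fun a => quadraticChar F (r - a^2))]
    refine Finset.sum_congr rfl fun t _ => ?_
    rw [Finset.sum_congr rfl (fun a ha => by
      rw [(Finset.mem_filter.mp ha).2] :
        ∀ a ∈ Finset.univ.filter (fun a : F => a^2 = t), _ = quadraticChar F (r - t)),
      Finset.sum_const, nsmul_eq_mul]
  rw [regroup]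
  have cards : ∀ t : F, ((Finset.univ.filter (fun a : F => a^2 = t)).card : ℤ)
      = quadraticChar F t + 1 := by
    intro t
    have := quadraticChar_card_sqrts hchar t
    rw [← this, Set.toFinset_setOf]
  simp_rw [cards]
  have expand : ∑ t : F, (quadraticChar F t + 1) * quadraticChar F (r - t)
      = (∑ t : F, quadraticChar F t * quadraticChar F (r - t))
        + ∑ t : F, quadraticChar F (r - t) := by
    rw [← Finset.sum_add_distrib]
    refine Finset.sum_congr rfl fun t _ => by ring
  rw [expand]
  have shift : ∑ t : F, quadraticChar F (r - t) = 0 := by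
    rw [show ∑ t : F, quadraticChar F (r - t) = ∑ t : F, quadraticChar F t from
      Finset.sum_nbij' (fun t => r - t) (fun t => r - t)
        (fun t _ => Finset.mem_univ _) (fun t _ => Finset.mem_univ _)
        (fun t _ => by ring) (fun t _ => by ring) (fun t _ => rfl)]
    exact quadraticChar_sum_zero hchar
  rw [shift, add_zero]
  -- now the Jacobi-type sum
  have mul : ∀ t : F, quadraticChar F t * quadraticChar F (r - t)
      = quadraticChar F (t * (r - t)) := fun t => (map_mul (quadraticChar F) _ _).symm
  simp_rw [mul]
  rw [← Finset.add_sum_erase Finset.univ _ (Finset.mem_univ (0 : F))]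
  rw [show quadraticChar F (0 * (r - 0)) = 0 by rw [zero_mul]; exact quadraticChar_zero,
    zero_add]
  have step : ∀ t ∈ Finset.univ.erase (0 : F),
      quadraticChar F (t * (r - t)) = quadraticChar F (r * t⁻¹ - 1) := by
    intro t ht
    have ht0 : t ≠ 0 := Finset.ne_of_mem_erase ht
    have : t * (r - t) = t^2 * (r * t⁻¹ - 1) := by field_simp
    rw [this, map_mul, quadraticChar_sq_one' ht0, one_mul]
  rw [Finset.sum_congr rfl step]
  have bij : ∑ t ∈ Finset.univ.erase (0 : F), quadraticChar F (r * t⁻¹ - 1)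
      = ∑ b ∈ Finset.univ.erase (-1 : F), quadraticChar F b := by
    refine Finset.sum_nbij' (fun t => r * t⁻¹ - 1) (fun b => r * (b + 1)⁻¹) ?_ ?_ ?_ ?_ ?_
    · intro t ht
      have ht0 : t ≠ 0 := Finset.ne_of_mem_erase ht
      refine Finset.mem_erase.mpr ⟨?_, Finset.mem_univ _⟩
      intro h
      have : r * t⁻¹ = 0 := by linear_combination h
      rcases mul_eq_zero.mp this with h' | h'
      · exact hr h'
      · exact ht0 (inv_eq_zero.mp h')
    · intro b hb
      have hb1 : b ≠ -1 := Finset.ne_of_mem_erase hb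
      have hb1' : b + 1 ≠ 0 := fun h => hb1 (by linear_combination h)
      refine Finset.mem_erase.mpr ⟨?_, Finset.mem_univ _⟩
      intro h
      rcases mul_eq_zero.mp h with h' | h'
      · exact hr h'
      · exact hb1' (inv_eq_zero.mp h')
    · intro t ht
      have ht0 : t ≠ 0 := Finset.ne_of_mem_erase ht
      show r * (r * t⁻¹ - 1 + 1)⁻¹ = t
      rw [show r * t⁻¹ - 1 + 1 = r * t⁻¹ from by ring, mul_inv, inv_inv,
        mul_comm r⁻¹ t, ← mul_assoc, mul_comm r t, mul_assoc, mul_inv_cancel₀ hr, mul_one]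
    · intro b hb
      have hb1' : b + 1 ≠ 0 := fun h => (Finset.ne_of_mem_erase hb) (by linear_combination h)
      show r * (r * (b + 1)⁻¹)⁻¹ - 1 = b
      rw [mul_inv, inv_inv, mul_comm r⁻¹ (b+1), ← mul_assoc, mul_comm r (b+1), mul_assoc,
        mul_inv_cancel₀ hr, mul_one]
      ring
    · intro t _; rfl
  rw [bij, Finset.sum_erase_eq_sub (Finset.mem_univ _), quadraticChar_sum_zero hchar,
    zero_sub]

end cardsec

section cardsec2
variable {F : Type} [Field F] [Fintype F] [DecidableEq F]

lemma sph_card_ge (hodd : Odd (Fintype.card F)) {r : F} (hr : r ≠ 0) :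
    (Fintype.card F : ℤ) - 1 ≤ ((sph F 2 r).card : ℤ) := by
  classical
  have hchar := char_ne_two (F := F) hodd
  have hcard : (sph F 2 r).card
      = (Finset.univ.filter (fun p : F × F => p.1^2 + p.2^2 = r)).card := by
    refine Finset.card_nbij' (fun x => (x 0, x 1)) (fun p => ![p.1, p.2]) ?_ ?_ ?_ ?_
    · intro x hx
      simp only [Finset.mem_coe, sph, Finset.mem_filter, Finset.mem_univ, true_and, nrm_two] at hx ⊢
      linear_combination hx
    · intro p hp
      simp only [Finset.mem_coe, Finset.mem_filter, Finset.mem_univ, true_and] at hp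
      simp only [Finset.mem_coe, sph, Finset.mem_filter, Finset.mem_univ, true_and, nrm_two,
        Matrix.cons_val_zero, Matrix.cons_val_one, Matrix.head_cons]
      linear_combination hp
    · intro x hx
      funext i
      fin_cases i <;> simp
    · intro p hp
      simp
  rw [hcard]
  have fib : (Finset.univ.filter (fun p : F × F => p.1^2 + p.2^2 = r)).card
      = ∑ a : F, (Finset.univ.filter (fun b : F => b^2 = r - a^2)).card := by
    rw [Finset.card_eq_sum_card_fiberwise (f := fun p : F × F => p.1)
      (t := Finset.univ) (fun p _ => Finset.mem_univ _)]
    refine Finset.sum_congr rfl fun a _ => ?_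
    refine Finset.card_nbij' (fun p => p.2) (fun b => (a, b)) ?_ ?_ ?_ ?_
    · intro p hp
      simp only [Finset.mem_coe, Finset.mem_filter, Finset.mem_univ, true_and] at hp ⊢
      rw [← hp.2]
      linear_combination hp.1
    · intro b hb
      simp only [Finset.mem_coe, Finset.mem_filter, Finset.mem_univ, true_and] at hb ⊢
      exact ⟨by linear_combination hb, trivial⟩
    · intro p hp
      simp only [Finset.mem_coe, Finset.mem_filter, Finset.mem_univ, true_and] at hp
      exact Prod.ext hp.2.symm rfl
    · intro b hb
      rfl
  rw [fib]
  push_cast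
  have cards : ∀ a : F, ((Finset.univ.filter (fun b : F => b^2 = r - a^2)).card : ℤ)
      = quadraticChar F (r - a^2) + 1 := fun a => by
    rw [← quadraticChar_card_sqrts hchar, Set.toFinset_setOf]
  rw [Finset.sum_congr rfl fun a _ => cards a, Finset.sum_add_distrib,
    char_sum_eq hchar hr]
  simp only [Finset.sum_const, Finset.card_univ, nsmul_eq_mul, mul_one]
  have : quadraticChar F (-1) ≤ 1 := by
    rcases quadraticChar_dichotomy (neg_ne_zero.mpr (one_ne_zero : (1:F) ≠ 0)) with h | h <;>
      rw [h] <;> norm_num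
  linarith

end cardsec2

end aux

/-- the `L² → L⁴` extension estimate for circles of nonzero
radius in `𝔽_q²`, with an absolute constant `C`. -/
theorem stmt5 :
    ∃ C : ℝ, 0 < C ∧
      ∀ (F : Type) [Field F] [Fintype F] [DecidableEq F],
        Odd (Fintype.card F) →
        ∀ (χ : AddChar F ℂ), χ ≠ 1 →
        ∀ r : F, r ≠ 0 →
        ∀ f : (Fin 2 → F) → ℂ,
          (∑ w : Fin 2 → F,
              ‖(((sph F 2 r).card : ℂ))⁻¹ * ∑ x ∈ sph F 2 r, χ (dotP w x) * f x‖ ^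
                (4 : ℝ)) ^ ((1 : ℝ) / 4) ≤
          C * ((((sph F 2 r).card : ℝ))⁻¹ * ∑ x ∈ sph F 2 r, ‖f x‖ ^ 2) ^ ((1 : ℝ) / 2) := by
  refine ⟨2, by norm_num, ?_⟩
  intro F _ _ _ hodd χ hχ r hr f
  have hchar : ringChar F ≠ 2 := char_ne_two hodd
  have h2 : (2:F) ≠ 0 := Ring.two_ne_zero hchar
  have hq3 : 3 ≤ Fintype.card F := by
    have h1 : 1 < Fintype.card F := Fintype.one_lt_card
    rw [Nat.odd_iff] at hodd
    omega
  have hnq : (Fintype.card F : ℤ) - 1 ≤ ((sph F 2 r).card : ℤ) := sph_card_ge hodd hr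
  have hn0 : (0:ℝ) < ((sph F 2 r).card : ℝ) := by
    have h1 : (2:ℤ) ≤ (Fintype.card F : ℤ) - 1 := by
      have : (3:ℤ) ≤ (Fintype.card F : ℤ) := by exact_mod_cast hq3
      omega
    have h4 : 2 ≤ (sph F 2 r).card := by exact_mod_cast le_trans h1 hnq
    have h5 : 0 < (sph F 2 r).card := by omega
    exact_mod_cast h5
  set T := ∑ x ∈ sph F 2 r, ‖f x‖^2 with hT
  have hT0 : 0 ≤ T := Finset.sum_nonneg fun _ _ => sq_nonneg _
  -- main L⁴ bound with natural powers
  have key4 : ∑ w : Fin 2 → F, ‖(((sph F 2 r).card : ℂ))⁻¹ *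
        ∑ x ∈ sph F 2 r, χ (dotP w x) * f x‖ ^ (4:ℕ)
      ≤ 16 * ((((sph F 2 r).card : ℝ))⁻¹ * T)^2 := by
    have hA : ∑ w : Fin 2 → F, ‖∑ x ∈ sph F 2 r, χ (dotP w x) * f x‖^(4:ℕ)
        = (Fintype.card F : ℝ)^2 * ∑ s : Fin 2 → F, ‖convC r f s‖^2 := by
      have e1 : ∀ w : Fin 2 → F, ‖∑ x ∈ sph F 2 r, χ (dotP w x) * f x‖^(4:ℕ)
          = ‖∑ s : Fin 2 → F, χ (dotP w s) * convC r f s‖^2 := by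
        intro w
        rw [← sq_eq χ r f w, norm_pow, ← pow_mul]
      simp_rw [e1]
      exact plancherel hχ (convC r f)
    have e2 : ∀ w : Fin 2 → F, ‖(((sph F 2 r).card : ℂ))⁻¹ *
          ∑ x ∈ sph F 2 r, χ (dotP w x) * f x‖^(4:ℕ)
        = (((sph F 2 r).card : ℝ))⁻¹^4 * ‖∑ x ∈ sph F 2 r, χ (dotP w x) * f x‖^(4:ℕ) := by
      intro w
      rw [norm_mul, mul_pow, norm_inv]
      norm_num
    simp_rw [e2]
    rw [← Finset.mul_sum, hA]
    set m := (((sph F 2 r).card : ℝ))⁻¹ with hm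
    set n := (((sph F 2 r).card : ℝ)) with hnn
    have hm0 : 0 < m := inv_pos.mpr hn0
    have hmn : m * n = 1 := inv_mul_cancel₀ (ne_of_gt hn0)
    have h3q : 3 * (Fintype.card F : ℝ)^2 ≤ 16 * n^2 := by
      have hq3' : (3:ℝ) ≤ (Fintype.card F : ℝ) := by exact_mod_cast hq3
      have hnq' : (Fintype.card F : ℝ) - 1 ≤ n := by
        rw [hnn]; exact_mod_cast hnq
      nlinarith [hq3', hnq']
    calc m^4 * ((Fintype.card F : ℝ)^2 * ∑ s : Fin 2 → F, ‖convC r f s‖^2)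
        ≤ m^4 * ((Fintype.card F : ℝ)^2 * (3 * T^2)) := by
          refine mul_le_mul_of_nonneg_left (mul_le_mul_of_nonneg_left ?_ (by positivity))
            (by positivity)
          exact conv_total h2 hr f
      _ = (3 * (Fintype.card F : ℝ)^2) * (m^4 * T^2) := by ring
      _ ≤ (16 * n^2) * (m^4 * T^2) := by
          refine mul_le_mul_of_nonneg_right h3q (by positivity)
      _ = 16 * (m*n)^2 * (m * T)^2 := by ring
      _ = 16 * (m * T)^2 := by rw [hmn]; ring
  -- convert to rpow form
  have lhs_eq : (∑ w : Fin 2 → F, ‖(((sph F 2 r).card : ℂ))⁻¹ *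
        ∑ x ∈ sph F 2 r, χ (dotP w x) * f x‖ ^ (4:ℝ))
      = ∑ w : Fin 2 → F, ‖(((sph F 2 r).card : ℂ))⁻¹ *
        ∑ x ∈ sph F 2 r, χ (dotP w x) * f x‖ ^ (4:ℕ) := by
    refine Finset.sum_congr rfl fun w _ => ?_
    rw [show ((4:ℝ)) = ((4:ℕ):ℝ) from by norm_num, Real.rpow_natCast]
  rw [lhs_eq]
  set B := (((sph F 2 r).card : ℝ))⁻¹ * T with hB
  have hB0 : 0 ≤ B := by positivity
  have h2B0 : (0:ℝ) ≤ 2 * B ^ ((1:ℝ)/2) := by positivity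
  have h16 : ∑ w : Fin 2 → F, ‖(((sph F 2 r).card : ℂ))⁻¹ *
        ∑ x ∈ sph F 2 r, χ (dotP w x) * f x‖ ^ (4:ℕ)
      ≤ (2 * B ^ ((1:ℝ)/2))^(4:ℕ) := by
    have : (2 * B ^ ((1:ℝ)/2))^(4:ℕ) = 16 * B^2 := by
      rw [mul_pow, ← Real.rpow_natCast (B ^ ((1:ℝ)/2)) 4, ← Real.rpow_mul hB0]
      norm_num
    rw [this]
    exact key4
  have hX0 : (0:ℝ) ≤ ∑ w : Fin 2 → F, ‖(((sph F 2 r).card : ℂ))⁻¹ *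
        ∑ x ∈ sph F 2 r, χ (dotP w x) * f x‖ ^ (4:ℕ) :=
    Finset.sum_nonneg fun w _ => by positivity
  have step := Real.rpow_le_rpow hX0 h16 (by norm_num : (0:ℝ) ≤ 1/4)
  refine le_trans step ?_
  rw [← Real.rpow_natCast (2 * B ^ ((1:ℝ)/2)) 4, ← Real.rpow_mul h2B0]
  norm_num
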